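/- Let q be an odd prime power, let d = 5, let 𝓔 ⊆ F_q^5 be a finite set with |𝓔| ≥ 12·q^3, and let r ∈ F_q. If |P_1(r)| > 1.34609 · |𝓔|^(11/3) (an inequality of real numbers, with real exponent 11/3), then 𝓔 contains a pair of 4-paths with dilation ratio r. -/

import Mathlib

/-- `norm2 x = x₁² + ⋯ + x_d²` for `x ∈ F_q^d`. -/
def norm2 {F : Type*} [Field F] {d : ℕ} (x : Fin d → F) : F := ∑ i, x i ^ 2

/-- `𝓔` contains a pair of `k`-stars with dilation ratio `r`: there are distinct
`x₁, …, x_{k+1} ∈ 𝓔` and distinct `y₁, …, y_{k+1} ∈ 𝓔` with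
`‖y_i − y₁‖ = r‖x_i − x₁‖ ≠ 0` for `i = 2, …, k+1`. -/
def ContainsPairOfStars {F : Type*} [Field F] {d : ℕ}
    (𝓔 : Finset (Fin d → F)) (k : ℕ) (r : F) : Prop :=
  ∃ x y : Fin (k + 1) → (Fin d → F),
    Function.Injective x ∧ Function.Injective y ∧
    (∀ i, x i ∈ 𝓔) ∧ (∀ i, y i ∈ 𝓔) ∧
    ∀ i : Fin (k + 1), i ≠ 0 →
      norm2 (y i - y 0) = r * norm2 (x i - x 0) ∧ r * norm2 (x i - x 0) ≠ 0

/-- `𝓔` contains a pair of `k`-paths with dilation ratio `r`: there are distinct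
`x₁, …, x_{k+1} ∈ 𝓔` and distinct `y₁, …, y_{k+1} ∈ 𝓔` with
`‖y_{i+1} − y_i‖ = r‖x_{i+1} − x_i‖ ≠ 0` for `i = 1, …, k`. -/
def ContainsPairOfPaths {F : Type*} [Field F] {d : ℕ}
    (𝓔 : Finset (Fin d → F)) (k : ℕ) (r : F) : Prop :=
  ∃ x y : Fin (k + 1) → (Fin d → F),
    Function.Injective x ∧ Function.Injective y ∧
    (∀ i, x i ∈ 𝓔) ∧ (∀ i, y i ∈ 𝓔) ∧
    ∀ i : Fin k,
      norm2 (y i.succ - y i.castSucc) = r * norm2 (x i.succ - x i.castSucc) ∧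
      r * norm2 (x i.succ - x i.castSucc) ≠ 0

open scoped Classical

/-- `P_k(r)`: tuples `(x₁, …, x_{k+1}, y₁, …, y_{k+1}) ∈ 𝓔^{2k+2}` with
`‖y_{i+1} − y_i‖ = r‖x_{i+1} − x_i‖ ≠ 0` for all `i = 1, …, k`. -/

noncomputable def Pset {F : Type*} [Field F] [Fintype F] {d : ℕ}
    (𝓔 : Finset (Fin d → F)) (k : ℕ) (r : F) :
    Finset ((Fin (k + 1) → Fin d → F) × (Fin (k + 1) → Fin d → F)) :=
  Finset.univ.filter fun p =>
    (∀ i, p.1 i ∈ 𝓔) ∧ (∀ i, p.2 i ∈ 𝓔) ∧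
    ∀ i : Fin k,
      norm2 (p.2 i.succ - p.2 i.castSucc) = r * norm2 (p.1 i.succ - p.1 i.castSucc) ∧
      r * norm2 (p.1 i.succ - p.1 i.castSucc) ≠ 0

section AuxPaths

set_option linter.unusedSectionVars false

variable {F : Type*} [Field F] [Fintype F]

private lemma norm2_sub_symm' {d : ℕ} (a b : Fin d → F) : norm2 (a - b) = norm2 (b - a) := by
  unfold norm2
  exact Finset.sum_congr rfl fun i _ => by simp [Pi.sub_apply]; ring

private lemma norm2_self' {d : ℕ} (a : Fin d → F) : norm2 (a - a) = 0 := by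
  simp [norm2]

private lemma sq_card' (c : F) : (Finset.univ.filter (fun a : F => a ^ 2 = c)).card ≤ 2 := by
  rcases (Finset.univ.filter (fun a : F => a ^ 2 = c)).eq_empty_or_nonempty with h | ⟨a₀, ha₀⟩
  · simp [h]
  · have ha₀' : a₀ ^ 2 = c := (Finset.mem_filter.mp ha₀).2
    have hsub : (Finset.univ.filter (fun a : F => a ^ 2 = c)) ⊆ {a₀, -a₀} := by
      intro a ha
      have h : a ^ 2 = c := (Finset.mem_filter.mp ha).2
      have : a * a = a₀ * a₀ := by rw [← sq, ← sq, h, ha₀']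
      rcases mul_self_eq_mul_self_iff.mp this with h' | h' <;> simp [h']
    refine (Finset.card_le_card hsub).trans ?_
    exact (Finset.card_insert_le _ _).trans (by simp)

private lemma sphere_card' (t : F) :
    (Finset.univ.filter (fun z : Fin 5 → F => norm2 z = t)).card ≤ 2 * Fintype.card F ^ 4 := by
  set s := Finset.univ.filter (fun z : Fin 5 → F => norm2 z = t) with hs
  have h := Finset.card_le_mul_card_image_of_maps_to
    (f := fun z : Fin 5 → F => fun i : Fin 4 => z i.castSucc) (t := Finset.univ)
    (fun a _ => Finset.mem_univ _) 2 ?_ (s := s)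
  · calc s.card ≤ 2 * Finset.univ.card := h
      _ = 2 * Fintype.card F ^ 4 := by
          rw [Finset.card_univ, Fintype.card_fun]; simp
  · intro w _
    set c : F := t - ∑ i : Fin 4, w i ^ 2 with hc
    have hmap : ∀ z ∈ s.filter (fun z => (fun i : Fin 4 => z i.castSucc) = w),
        z (Fin.last 4) ∈ Finset.univ.filter (fun a : F => a ^ 2 = c) := by
      intro z hz
      obtain ⟨hzs, hzw⟩ := Finset.mem_filter.mp hz
      have hn : norm2 z = t := (Finset.mem_filter.mp hzs).2
      rw [norm2, Fin.sum_univ_castSucc] at hn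
      have : ∀ i : Fin 4, z i.castSucc = w i := fun i => congrFun hzw i
      simp only [this] at hn
      simp only [Finset.mem_filter, Finset.mem_univ, true_and, hc]
      linear_combination hn
    have hinj : Set.InjOn (fun z : Fin 5 → F => z (Fin.last 4))
        (s.filter (fun z => (fun i : Fin 4 => z i.castSucc) = w)) := by
      intro z hz z' hz' hzz
      obtain ⟨_, hzw⟩ := Finset.mem_filter.mp hz
      obtain ⟨_, hzw'⟩ := Finset.mem_filter.mp hz'
      funext i
      rcases Fin.eq_castSucc_or_eq_last i with ⟨j, rfl⟩ | rfl
      · rw [show z j.castSucc = w j from congrFun hzw j,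
          show z' j.castSucc = w j from congrFun hzw' j]
      · exact hzz
    calc (s.filter (fun z => (fun i : Fin 4 => z i.castSucc) = w)).card
        ≤ (Finset.univ.filter (fun a : F => a ^ 2 = c)).card :=
          Finset.card_le_card_of_injOn _ hmap hinj
      _ ≤ 2 := sq_card' c

/-- adjacency in the auxiliary graph on pairs -/
private def PAdj (r : F) (u v : (Fin 5 → F) × (Fin 5 → F)) : Prop :=
  norm2 (v.2 - u.2) = r * norm2 (v.1 - u.1) ∧ r * norm2 (v.1 - u.1) ≠ 0

private lemma PAdj_symm (r : F) (u v : (Fin 5 → F) × (Fin 5 → F)) (h : PAdj r u v) :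
    PAdj r v u := by
  obtain ⟨h1, h2⟩ := h
  constructor
  · rw [norm2_sub_symm' u.2 v.2, norm2_sub_symm' u.1 v.1]; exact h1
  · rw [norm2_sub_symm' u.1 v.1]; exact h2

private lemma PAdj_ne (r : F) (u v : (Fin 5 → F) × (Fin 5 → F)) (h : PAdj r u v) :
    v.1 ≠ u.1 ∧ v.2 ≠ u.2 := by
  obtain ⟨h1, h2⟩ := h
  constructor
  · intro he; rw [he, norm2_self'] at h2; simp at h2
  · intro he; rw [he, norm2_self'] at h1; rw [← h1] at h2; simp at h2

private lemma exists_min_degree' {α : Type*} [DecidableEq α] (A : α → α → Prop)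
    (hsymm : ∀ u v, A u v → A v u) (D : ℕ) :
    ∀ S : Finset α, 2 * D * S.card + 1 ≤ ∑ u ∈ S, (S.filter (A u)).card →
      ∃ U, U ⊆ S ∧ U.Nonempty ∧ ∀ u ∈ U, D + 1 ≤ (U.filter (A u)).card := by
  intro S
  induction S using Finset.strongInduction with
  | _ S ih =>
    intro hsum
    by_cases hex : ∃ u ∈ S, (S.filter (A u)).card ≤ D
    · obtain ⟨u, huS, hu⟩ := hex
      set S' := S.erase u with hS'
      have hss : S' ⊂ S := Finset.erase_ssubset huS
      have hstep : ∀ v ∈ S', (S.filter (A v)).card ≤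
          (S'.filter (A v)).card + (if A v u then 1 else 0) := by
        intro v hv
        by_cases hvu : A v u
        · have : S.filter (A v) ⊆ insert u (S'.filter (A v)) := by
            intro w hw
            obtain ⟨hwS, hwA⟩ := Finset.mem_filter.mp hw
            rcases eq_or_ne w u with rfl | hne
            · exact Finset.mem_insert_self _ _
            · exact Finset.mem_insert_of_mem (Finset.mem_filter.mpr
                ⟨Finset.mem_erase.mpr ⟨hne, hwS⟩, hwA⟩)
          simpa [hvu] using (Finset.card_le_card this).trans (Finset.card_insert_le _ _)
        · have : S.filter (A v) ⊆ S'.filter (A v) := by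
            intro w hw
            obtain ⟨hwS, hwA⟩ := Finset.mem_filter.mp hw
            have hne : w ≠ u := by rintro rfl; exact hvu hwA
            exact Finset.mem_filter.mpr ⟨Finset.mem_erase.mpr ⟨hne, hwS⟩, hwA⟩
          simpa [hvu] using Finset.card_le_card this
      have hcount : (S'.filter (fun v => A v u)).card ≤ D := by
        refine le_trans (Finset.card_le_card ?_) hu
        intro v hv
        obtain ⟨hvS', hvA⟩ := Finset.mem_filter.mp hv
        exact Finset.mem_filter.mpr ⟨(Finset.mem_erase.mp hvS').2, hsymm _ _ hvA⟩
      have hsum' : ∑ v ∈ S, (S.filter (A v)).card ≤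
          (∑ v ∈ S', (S'.filter (A v)).card) + 2 * D := by
        rw [← Finset.sum_erase_add _ _ huS, ← hS']
        have h1 : ∑ v ∈ S', (S.filter (A v)).card ≤
            (∑ v ∈ S', (S'.filter (A v)).card) + D := by
          calc ∑ v ∈ S', (S.filter (A v)).card
              ≤ ∑ v ∈ S', ((S'.filter (A v)).card + (if A v u then 1 else 0)) :=
                Finset.sum_le_sum hstep
            _ = (∑ v ∈ S', (S'.filter (A v)).card) + (S'.filter (fun v => A v u)).card := by
                rw [Finset.sum_add_distrib, Finset.sum_boole]; simp
            _ ≤ _ := by omega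
        omega
      have hpos : 0 < S.card := Finset.card_pos.mpr ⟨u, huS⟩
      have hcardS : S.card = S'.card + 1 := by
        rw [hS', Finset.card_erase_of_mem huS]; omega
      have key : 2 * D * S'.card + 1 ≤ ∑ v ∈ S', (S'.filter (A v)).card := by
        have h2 : 2 * D * S.card = 2 * D * S'.card + 2 * D := by rw [hcardS]; ring
        omega
      obtain ⟨U, hU1, hU2, hU3⟩ := ih S' hss key
      exact ⟨U, hU1.trans (Finset.erase_subset _ _), hU2, hU3⟩
    · push_neg at hex
      have hne : S.Nonempty := by
        rcases S.eq_empty_or_nonempty with rfl | h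
        · simp at hsum
        · exact h
      exact ⟨S, Finset.Subset.refl _, hne, fun u hu => hex u hu⟩

private lemma extend_lemma' (r : F) (hr : r ≠ 0) (U : Finset ((Fin 5 → F) × (Fin 5 → F)))
    (hdeg : ∀ u ∈ U, 12 * Fintype.card F ^ 4 + 1 ≤ (U.filter (PAdj r u)).card)
    (v : (Fin 5 → F) × (Fin 5 → F)) (hv : v ∈ U) (A B : Finset (Fin 5 → F))
    (hA : A.card ≤ 3) (hB : B.card ≤ 3) :
    ∃ w ∈ U, PAdj r v w ∧ w.1 ∉ A ∧ w.2 ∉ B := by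
  set q := Fintype.card F with hq
  set Nv := U.filter (PAdj r v) with hNv
  have hNvcard : 12 * q ^ 4 + 1 ≤ Nv.card := hdeg v hv
  set Bad := Nv.filter (fun w => w.1 ∈ A ∨ w.2 ∈ B) with hBad
  have hsub : Bad ⊆ (A.biUnion fun a => Nv.filter (fun w => w.1 = a)) ∪
      (B.biUnion fun b => Nv.filter (fun w => w.2 = b)) := by
    intro w hw
    obtain ⟨hwN, hor⟩ := Finset.mem_filter.mp hw
    rcases hor with h | h
    · exact Finset.mem_union_left _ (Finset.mem_biUnion.mpr ⟨w.1, h,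
        Finset.mem_filter.mpr ⟨hwN, rfl⟩⟩)
    · exact Finset.mem_union_right _ (Finset.mem_biUnion.mpr ⟨w.2, h,
        Finset.mem_filter.mpr ⟨hwN, rfl⟩⟩)
  have hfixfst : ∀ a, (Nv.filter (fun w => w.1 = a)).card ≤ 2 * q ^ 4 := by
    intro a
    have hmap : ∀ w ∈ Nv.filter (fun w => w.1 = a),
        (w.2 - v.2) ∈ Finset.univ.filter
          (fun z : Fin 5 → F => norm2 z = r * norm2 (a - v.1)) := by
      intro w hw
      obtain ⟨hwN, hwa⟩ := Finset.mem_filter.mp hw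
      obtain ⟨_, heq, _⟩ := Finset.mem_filter.mp hwN
      simp only [Finset.mem_filter, Finset.mem_univ, true_and]
      rw [heq, hwa]
    have hinj : Set.InjOn (fun w : (Fin 5 → F) × (Fin 5 → F) => w.2 - v.2)
        (Nv.filter (fun w => w.1 = a)) := by
      intro w hw w' hw' h
      have hwa := (Finset.mem_filter.mp hw).2
      have hwa' := (Finset.mem_filter.mp hw').2
      have h' : w.2 - v.2 = w'.2 - v.2 := h
      exact Prod.ext (hwa.trans hwa'.symm) (sub_left_injective h')
    exact (Finset.card_le_card_of_injOn _ hmap hinj).trans (sphere_card' _)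
  have hfixsnd : ∀ b, (Nv.filter (fun w => w.2 = b)).card ≤ 2 * q ^ 4 := by
    intro b
    have hmap : ∀ w ∈ Nv.filter (fun w => w.2 = b),
        (w.1 - v.1) ∈ Finset.univ.filter
          (fun z : Fin 5 → F => norm2 z = r⁻¹ * norm2 (b - v.2)) := by
      intro w hw
      obtain ⟨hwN, hwb⟩ := Finset.mem_filter.mp hw
      obtain ⟨_, heq, _⟩ := Finset.mem_filter.mp hwN
      simp only [Finset.mem_filter, Finset.mem_univ, true_and]
      rw [← hwb] at *
      field_simp
      rw [mul_comm]
      exact heq.symm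
    have hinj : Set.InjOn (fun w : (Fin 5 → F) × (Fin 5 → F) => w.1 - v.1)
        (Nv.filter (fun w => w.2 = b)) := by
      intro w hw w' hw' h
      have hwb := (Finset.mem_filter.mp hw).2
      have hwb' := (Finset.mem_filter.mp hw').2
      have h' : w.1 - v.1 = w'.1 - v.1 := h
      exact Prod.ext (sub_left_injective h') (hwb.trans hwb'.symm)
    exact (Finset.card_le_card_of_injOn _ hmap hinj).trans (sphere_card' _)
  have hBadcard : Bad.card ≤ 12 * q ^ 4 := by
    calc Bad.card ≤ ((A.biUnion fun a => Nv.filter (fun w => w.1 = a)) ∪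
        (B.biUnion fun b => Nv.filter (fun w => w.2 = b))).card := Finset.card_le_card hsub
      _ ≤ (A.biUnion fun a => Nv.filter (fun w => w.1 = a)).card +
          (B.biUnion fun b => Nv.filter (fun w => w.2 = b)).card := Finset.card_union_le _ _
      _ ≤ (∑ a ∈ A, (Nv.filter (fun w => w.1 = a)).card) +
          (∑ b ∈ B, (Nv.filter (fun w => w.2 = b)).card) :=
          Nat.add_le_add (Finset.card_biUnion_le) (Finset.card_biUnion_le)
      _ ≤ (∑ _a ∈ A, 2 * q ^ 4) + (∑ _b ∈ B, 2 * q ^ 4) :=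
          Nat.add_le_add (Finset.sum_le_sum fun a _ => hfixfst a)
            (Finset.sum_le_sum fun b _ => hfixsnd b)
      _ = A.card * (2 * q ^ 4) + B.card * (2 * q ^ 4) := by simp [Finset.sum_const, mul_comm]
      _ ≤ 3 * (2 * q ^ 4) + 3 * (2 * q ^ 4) :=
          Nat.add_le_add (Nat.mul_le_mul_right _ hA) (Nat.mul_le_mul_right _ hB)
      _ = 12 * q ^ 4 := by ring
  have : (Nv \ Bad).Nonempty := by
    rw [← Finset.card_pos]
    have := Finset.le_card_sdiff Bad Nv
    omega
  obtain ⟨w, hw⟩ := this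
  obtain ⟨hwN, hwB⟩ := Finset.mem_sdiff.mp hw
  obtain ⟨hwU, hwA⟩ := Finset.mem_filter.mp hwN
  refine ⟨w, hwU, hwA, ?_, ?_⟩
  · intro h; exact hwB (Finset.mem_filter.mpr ⟨hwN, Or.inl h⟩)
  · intro h; exact hwB (Finset.mem_filter.mpr ⟨hwN, Or.inr h⟩)

private lemma Pset_le_sum_deg' (𝓔 : Finset (Fin 5 → F)) (r : F) :
    (Pset 𝓔 1 r).card ≤
      ∑ u ∈ 𝓔 ×ˢ 𝓔, ((𝓔 ×ˢ 𝓔).filter (PAdj r u)).card := by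
  set V := 𝓔 ×ˢ 𝓔 with hV
  set E₀ := (V ×ˢ V).filter (fun p => PAdj r p.1 p.2) with hE₀
  have h1 : (Pset 𝓔 1 r).card ≤ E₀.card := by
    apply Finset.card_le_card_of_injOn
      (fun p => ((p.1 0, p.2 0), (p.1 1, p.2 1)))
    · intro p hp
      simp only [Finset.mem_coe, Pset, Finset.mem_filter, Finset.mem_univ, true_and] at hp
      obtain ⟨h1, h2, h3⟩ := hp
      have h30 := h3 0
      have hs : (0 : Fin 1).succ = (1 : Fin 2) := rfl
      have hc : (0 : Fin 1).castSucc = (0 : Fin 2) := rfl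
      rw [hs, hc] at h30
      simp only [Finset.mem_coe, hE₀, Finset.mem_filter, Finset.mem_product, hV]
      exact ⟨⟨⟨h1 0, h2 0⟩, h1 1, h2 1⟩, h30⟩
    · intro p hp p' hp' h
      simp only [Prod.mk.injEq] at h
      obtain ⟨⟨h00, h01⟩, h10, h11⟩ := h
      have e1 : p.1 = p'.1 := by
        funext i
        fin_cases i
        · exact h00
        · exact h10
      have e2 : p.2 = p'.2 := by
        funext i
        fin_cases i
        · exact h01
        · exact h11
      exact Prod.ext e1 e2
  have h2 : E₀.card = ∑ u ∈ V, (E₀.filter (fun p => p.1 = u)).card := by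
    apply Finset.card_eq_sum_card_fiberwise
    intro p hp
    exact (Finset.mem_product.mp (Finset.mem_filter.mp hp).1).1
  have h3 : ∀ u ∈ V, (E₀.filter (fun p => p.1 = u)).card ≤ (V.filter (PAdj r u)).card := by
    intro u hu
    apply Finset.card_le_card_of_injOn (fun p => p.2)
    · intro p hp
      obtain ⟨hpE, hpu⟩ := Finset.mem_filter.mp hp
      obtain ⟨hpV, hpA⟩ := Finset.mem_filter.mp hpE
      refine Finset.mem_filter.mpr ⟨(Finset.mem_product.mp hpV).2, ?_⟩
      rwa [hpu] at hpA
    · intro p hp p' hp' h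
      have hpu := (Finset.mem_filter.mp hp).2
      have hpu' := (Finset.mem_filter.mp hp').2
      exact Prod.ext (hpu.trans hpu'.symm) h
  calc (Pset 𝓔 1 r).card ≤ E₀.card := h1
    _ = ∑ u ∈ V, (E₀.filter (fun p => p.1 = u)).card := h2
    _ ≤ ∑ u ∈ V, (V.filter (PAdj r u)).card := Finset.sum_le_sum h3

private lemma card_triple_le' {α : Type*} [DecidableEq α] (a b c : α) :
    ({a, b, c} : Finset α).card ≤ 3 := by
  calc ({a, b, c} : Finset α).card ≤ ({b, c} : Finset α).card + 1 := Finset.card_insert_le _ _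
    _ ≤ (({c} : Finset α).card + 1) + 1 := Nat.add_le_add_right (Finset.card_insert_le _ _) 1
    _ ≤ 3 := by simp

private lemma vec5_injective' {α : Type*} (a b c d e : α)
    (h21 : b ≠ a) (h31 : c ≠ a) (h32 : c ≠ b)
    (h41 : d ≠ a) (h42 : d ≠ b) (h43 : d ≠ c)
    (h51 : e ≠ a) (h52 : e ≠ b) (h53 : e ≠ c) (h54 : e ≠ d) :
    Function.Injective ![a, b, c, d, e] := by
  intro i j h
  fin_cases i <;> fin_cases j <;> simp_all

end AuxPaths

/-- For `d = 5`, if `|𝓔| ≥ 12·q³` and `|P_1(r)| > 1.34609·|𝓔|^(11/3)`,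
then `𝓔` contains a pair of `4`-paths with dilation ratio `r`. -/
theorem paths_of_Pset_one_large_dim_five {F : Type*} [Field F] [Fintype F]
    (hodd : Odd (Fintype.card F))
    (𝓔 : Finset (Fin 5 → F)) (r : F)
    (hcard : 12 * Fintype.card F ^ 3 ≤ 𝓔.card)
    (hP : 1.34609 * (𝓔.card : ℝ) ^ ((11 : ℝ) / 3) < ((Pset 𝓔 1 r).card : ℝ)) :
    ContainsPairOfPaths 𝓔 4 r := by
  classical
  set q := Fintype.card F with hq
  set n := 𝓔.card with hn
  -- q ≥ 3
  have hq2 : 2 ≤ q := Fintype.one_lt_card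
  have hq3 : 3 ≤ q := by
    obtain ⟨k, hk⟩ := hodd
    omega
  have hn1 : 1 ≤ n := by
    have h1 : 1 * 1 ≤ 12 * q ^ 3 :=
      Nat.mul_le_mul (by norm_num) (Nat.one_le_pow _ _ (by omega))
    omega
  -- r ≠ 0
  have hPpos : 0 < (Pset 𝓔 1 r).card := by
    have h0 : (0:ℝ) < ((Pset 𝓔 1 r).card : ℝ) :=
      lt_of_le_of_lt (by positivity) hP
    exact_mod_cast h0
  have hr : r ≠ 0 := by
    obtain ⟨p, hp⟩ := Finset.card_pos.mp hPpos
    simp only [Pset, Finset.mem_filter, Finset.mem_univ, true_and] at hp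
    obtain ⟨_, _, h3⟩ := hp
    intro h0
    exact ((h3 0).2) (by rw [h0, zero_mul])
  -- the numeric bound : 2 * (12 q⁴) * n² + 1 ≤ |P₁|
  have hnum : 2 * (12 * q ^ 4) * (n * n) + 1 ≤ (Pset 𝓔 1 r).card := by
    have hnR : (0:ℝ) < (n:ℝ) := by positivity
    -- natural-number inequality: 24 q⁴ n² + 1 ≤ 4 q² n³
    have hnat : 2 * (12 * q ^ 4) * (n * n) + 1 ≤ 4 * q ^ 2 * n ^ 3 := by
      have h1 : 1 ≤ q ^ 4 * (n * n) :=
        Nat.one_le_iff_ne_zero.mpr (Nat.mul_ne_zero (pow_ne_zero _ (by omega))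
          (Nat.mul_ne_zero (by omega) (by omega)))
      have h2 : 25 * q ^ 4 ≤ 48 * q ^ 5 := by nlinarith
      have h3 : 48 * q ^ 5 * (n * n) = 4 * q ^ 2 * ((12 * q ^ 3) * (n * n)) := by ring
      have h4 : 4 * q ^ 2 * ((12 * q ^ 3) * (n * n)) ≤ 4 * q ^ 2 * (n * (n * n)) := by
        apply Nat.mul_le_mul_left
        exact Nat.mul_le_mul_right _ hcard
      nlinarith
    -- real chain
    have hsplit : (n:ℝ) ^ ((11 : ℝ) / 3) = (n:ℝ) ^ (3:ℕ) * (n:ℝ) ^ ((2:ℝ)/3) := by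
      rw [← Real.rpow_natCast (n:ℝ) 3, ← Real.rpow_add hnR]
      norm_num
    have h2q : ((2 * q : ℕ) : ℝ) ^ (2:ℕ) ≤ (n:ℝ) ^ ((2:ℝ)/3) := by
      have h8 : ((2 * q : ℕ) : ℝ) ^ (3:ℕ) ≤ (n:ℝ) := by
        have : (2 * q) ^ 3 ≤ n := by nlinarith
        calc ((2 * q : ℕ) : ℝ) ^ (3:ℕ) = (((2 * q) ^ 3 : ℕ) : ℝ) := by push_cast; ring
          _ ≤ (n:ℝ) := by exact_mod_cast this
      have hbase : (0:ℝ) ≤ ((2 * q : ℕ) : ℝ) := by positivity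
      calc ((2 * q : ℕ) : ℝ) ^ (2:ℕ)
          = (((2 * q : ℕ) : ℝ) ^ (3:ℕ)) ^ ((2:ℝ)/3) := by
            rw [← Real.rpow_natCast (((2 * q : ℕ) : ℝ)) 3, ← Real.rpow_mul hbase,
              ← Real.rpow_natCast (((2 * q : ℕ) : ℝ)) 2]
            norm_num
        _ ≤ (n:ℝ) ^ ((2:ℝ)/3) := Real.rpow_le_rpow (by positivity) h8 (by norm_num)
    have hreal : ((2 * (12 * q ^ 4) * (n * n) + 1 : ℕ) : ℝ) < ((Pset 𝓔 1 r).card : ℝ) := by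
      calc ((2 * (12 * q ^ 4) * (n * n) + 1 : ℕ) : ℝ)
          ≤ ((4 * q ^ 2 * n ^ 3 : ℕ) : ℝ) := by exact_mod_cast hnat
        _ = (n:ℝ) ^ (3:ℕ) * (((2 * q : ℕ) : ℝ) ^ (2:ℕ)) := by push_cast; ring
        _ ≤ (n:ℝ) ^ (3:ℕ) * (n:ℝ) ^ ((2:ℝ)/3) := by
            apply mul_le_mul_of_nonneg_left h2q (by positivity)
        _ = (n:ℝ) ^ ((11 : ℝ) / 3) := hsplit.symm
        _ ≤ 1.34609 * (n : ℝ) ^ ((11 : ℝ) / 3) := by nlinarith [Real.rpow_nonneg hnR.le ((11:ℝ)/3)]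
        _ < ((Pset 𝓔 1 r).card : ℝ) := hP
    exact_mod_cast hreal.le
  -- set up the graph and min-degree subgraph
  set V := 𝓔 ×ˢ 𝓔 with hV
  have hVcard : V.card = n * n := by rw [hV, Finset.card_product]
  have hsumdeg : 2 * (12 * q ^ 4) * V.card + 1 ≤ ∑ u ∈ V, (V.filter (PAdj r u)).card := by
    rw [hVcard]
    exact le_trans hnum (Pset_le_sum_deg' 𝓔 r)
  obtain ⟨U, hUV, hUne, hUdeg⟩ := exists_min_degree' (PAdj r) (PAdj_symm r) (12 * q ^ 4) V hsumdeg
  -- greedy path construction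
  obtain ⟨v₁, hv₁⟩ := hUne
  obtain ⟨v₂, hv₂, hadj₁₂, _, _⟩ := extend_lemma' r hr U hUdeg v₁ hv₁ ∅ ∅ (by simp) (by simp)
  obtain ⟨v₃, hv₃, hadj₂₃, hx₃, hy₃⟩ := extend_lemma' r hr U hUdeg v₂ hv₂
    {v₁.1} {v₁.2} (by simp) (by simp)
  obtain ⟨v₄, hv₄, hadj₃₄, hx₄, hy₄⟩ := extend_lemma' r hr U hUdeg v₃ hv₃
    {v₁.1, v₂.1} {v₁.2, v₂.2}
    ((Finset.card_insert_le _ _).trans (by simp)) ((Finset.card_insert_le _ _).trans (by simp))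
  obtain ⟨v₅, hv₅, hadj₄₅, hx₅, hy₅⟩ := extend_lemma' r hr U hUdeg v₄ hv₄
    {v₁.1, v₂.1, v₃.1} {v₁.2, v₂.2, v₃.2} (card_triple_le' _ _ _) (card_triple_le' _ _ _)
  -- extract distinctness
  simp only [Finset.mem_insert, Finset.mem_singleton, not_or] at hx₃ hy₃ hx₄ hy₄ hx₅ hy₅
  obtain ⟨hne₂₁x, hne₂₁y⟩ := PAdj_ne r v₁ v₂ hadj₁₂
  obtain ⟨hne₃₂x, hne₃₂y⟩ := PAdj_ne r v₂ v₃ hadj₂₃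
  obtain ⟨hne₄₃x, hne₄₃y⟩ := PAdj_ne r v₃ v₄ hadj₃₄
  obtain ⟨hne₅₄x, hne₅₄y⟩ := PAdj_ne r v₄ v₅ hadj₄₅
  -- membership in 𝓔
  have hmem : ∀ v ∈ U, v.1 ∈ 𝓔 ∧ v.2 ∈ 𝓔 := by
    intro v hv
    exact Finset.mem_product.mp (hUV hv)
  obtain ⟨hm₁x, hm₁y⟩ := hmem v₁ hv₁
  obtain ⟨hm₂x, hm₂y⟩ := hmem v₂ hv₂
  obtain ⟨hm₃x, hm₃y⟩ := hmem v₃ hv₃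
  obtain ⟨hm₄x, hm₄y⟩ := hmem v₄ hv₄
  obtain ⟨hm₅x, hm₅y⟩ := hmem v₅ hv₅
  refine ⟨![v₁.1, v₂.1, v₃.1, v₄.1, v₅.1], ![v₁.2, v₂.2, v₃.2, v₄.2, v₅.2], ?_, ?_, ?_, ?_, ?_⟩
  · exact vec5_injective' _ _ _ _ _ hne₂₁x hx₃ hne₃₂x hx₄.1 hx₄.2 hne₄₃x
      hx₅.1 hx₅.2.1 hx₅.2.2 hne₅₄x
  · exact vec5_injective' _ _ _ _ _ hne₂₁y hy₃ hne₃₂y hy₄.1 hy₄.2 hne₄₃y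
      hy₅.1 hy₅.2.1 hy₅.2.2 hne₅₄y
  · intro i
    fin_cases i
    · exact hm₁x
    · exact hm₂x
    · exact hm₃x
    · exact hm₄x
    · exact hm₅x
  · intro i
    fin_cases i
    · exact hm₁y
    · exact hm₂y
    · exact hm₃y
    · exact hm₄y
    · exact hm₅y
  · intro i
    fin_cases i
    · exact hadj₁₂
    · exact hadj₂₃
    · exact hadj₃₄
    · exact hadj₄₅
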